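/- arXiv:1207.0258 — 7 statements merged into one kernel-verified Lean document; each statement's English description precedes it below -/
import Mathlib

section
/- The Suwa–Todo flow v_{ij} = max(0, min(Δ_{ij}, w_i + w_j − Δ_{ij}, w_i, w_j)), where Δ_{ij} = S_i − S_{j−1} + w_1 with S_i = Σ_{k=1}^i w_k and S_0 = S_n, satisfies the probability conservation law Σ_{j=1}^n v_{ij} = w_i for every i. -/
open Finset

lemma clamp_diff (a b c d : ℝ) (hab : a ≤ b) (hcd : c ≤ d) :
    min b (max a d) - min b (max a c)
      = max 0 (min (b - c) (min (d - a) (min (b - a) (d - c)))) := by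
  rcases le_total d a with h1 | h1
  · have e1 : max a d = a := max_eq_left h1
    have e2 : max a c = a := max_eq_left (hcd.trans h1)
    rw [e1, e2, sub_self]
    symm
    rw [max_eq_left]
    exact ((min_le_right _ _).trans (min_le_left _ _)).trans (by linarith)
  · rcases le_total b c with h2 | h2
    · have e1 : min b (max a d) = b :=
        min_eq_left (le_trans (h2.trans hcd) (le_max_right a d))
      have e2 : min b (max a c) = b := min_eq_left (h2.trans (le_max_right a c))
      rw [e1, e2, sub_self]
      symm
      rw [max_eq_left]
      exact (min_le_left _ _).trans (by linarith)
    · have e1 : min b (max a d) = min b d := by rw [max_eq_right h1]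
      have e2 : min b (max a c) = max a c := min_eq_right (max_le hab h2)
      have h0 : (0:ℝ) ≤ min (b - c) (min (d - a) (min (b - a) (d - c))) := by
        simp only [le_min_iff]
        exact ⟨by linarith, by linarith, by linarith, by linarith⟩
      rw [e1, e2, max_eq_right h0]
      calc min b d - max a c
          = min (b - max a c) (d - max a c) := (min_sub_sub_right _ _ _).symm
        _ = min (min (b-a) (b-c)) (min (d-a) (d-c)) := by
            rw [min_sub_sub_left, min_sub_sub_left]
        _ = min (b-c) (min (d-a) (min (b-a) (d-c))) := by ac_rfl

/-- Partial sums `S i = w 1 + ... + w i`, with the convention `S 0 = S n`. -/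
noncomputable def stS (n : ℕ) (w : ℕ → ℝ) (i : ℕ) : ℝ :=
  if i = 0 then ∑ k ∈ Finset.Icc 1 n, w k else ∑ k ∈ Finset.Icc 1 i, w k

/-- `Δ i j = S i - S (j-1) + w 1`. -/
noncomputable def stDelta (n : ℕ) (w : ℕ → ℝ) (i j : ℕ) : ℝ :=
  stS n w i - stS n w (j - 1) + w 1

/-- The Suwa–Todo flow
`v i j = max (0, min (Δ i j, w i + w j - Δ i j, w i, w j))`. -/
noncomputable def stFlow (n : ℕ) (w : ℕ → ℝ) (i j : ℕ) : ℝ :=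
  max 0 (min (stDelta n w i j) (min (w i + w j - stDelta n w i j) (min (w i) (w j))))

/-- The Suwa–Todo flow satisfies the probability conservation law (row sums). -/
theorem suwa_todo_row_sums (n : ℕ) (hn : 2 ≤ n) (w : ℕ → ℝ)
    (hw : ∀ k ∈ Finset.Icc 1 n, 0 < w k)
    (hmax : ∀ k ∈ Finset.Icc 1 n, w k ≤ w 1) :
    ∀ i ∈ Finset.Icc 1 n, ∑ j ∈ Finset.Icc 1 n, stFlow n w i j = w i := by
  intro i hi
  rw [Finset.mem_Icc] at hi
  set T : ℕ → ℝ := fun j => ∑ k ∈ Finset.Icc 1 j, w k with hT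
  -- basic facts about T
  have hwpos : ∀ k ∈ Finset.Icc 1 n, 0 ≤ w k := fun k hk => (hw k hk).le
  have hTmono : ∀ p q : ℕ, p ≤ q → q ≤ n → T p ≤ T q := by
    intro p q hpq hqn
    apply Finset.sum_le_sum_of_subset_of_nonneg (Finset.Icc_subset_Icc le_rfl hpq)
    intro k hk _
    rw [Finset.mem_Icc] at hk
    exact hwpos k (Finset.mem_Icc.mpr ⟨hk.1, hk.2.trans hqn⟩)
  have hTnonneg : ∀ p : ℕ, p ≤ n → 0 ≤ T p := by
    intro p hp
    apply Finset.sum_nonneg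
    intro k hk
    rw [Finset.mem_Icc] at hk
    exact hwpos k (Finset.mem_Icc.mpr ⟨hk.1, hk.2.trans hp⟩)
  have hTstep : ∀ j : ℕ, 1 ≤ j → T j = T (j - 1) + w j := by
    intro j hj
    have h : j - 1 + 1 = j := by omega
    simp only [hT]
    conv_lhs => rw [← h]
    rw [Finset.sum_Icc_succ_top (by omega : 1 ≤ j - 1 + 1), h]
  have hT1 : T 1 = w 1 := by simp [hT]
  have hw1 : 0 < w 1 := hw 1 (Finset.mem_Icc.mpr ⟨le_rfl, by omega⟩)
  -- the clamp interval [a, b]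
  set a : ℝ := T (i - 1) + w 1 with ha
  set b : ℝ := T i + w 1 with hb
  have hTi : T i = T (i - 1) + w i := hTstep i hi.1
  have hwi : 0 < w i := hw i (Finset.mem_Icc.mpr hi)
  have hab : a ≤ b := by rw [ha, hb, hTi]; linarith
  set F : ℝ → ℝ := fun x => min b (max a x) with hF
  -- each flow term is a difference of clamps
  have key2 : ∀ j ∈ Finset.Icc 2 n, stFlow n w i j = F (T j) - F (T (j - 1)) := by
    intro j hj
    rw [Finset.mem_Icc] at hj
    have hcd : T (j - 1) ≤ T j := hTmono (j-1) j (by omega) hj.2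
    rw [hF]
    rw [clamp_diff a b (T (j-1)) (T j) hab hcd]
    have hΔ : stDelta n w i j = b - T (j - 1) := by
      simp only [stDelta, stS, if_neg (by omega : ¬ i = 0), if_neg (by omega : ¬ j - 1 = 0)]
      rw [hb, hT]
      ring
    have hTj : T j = T (j - 1) + w j := hTstep j (by omega)
    have ewi : w i = b - a := by rw [hb, ha, hTi]; ring
    have ewj : w j = T j - T (j - 1) := by rw [hTj]; ring
    have e2 : w i + w j - (b - T (j - 1)) = T j - a := by
      rw [ewi, ewj]; ring
    rw [stFlow, hΔ, e2, ewi, ewj]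
  have key1 : stFlow n w i 1 = F (T n + w 1) - F (T n) := by
    have hcd : T n ≤ T n + w 1 := by linarith
    rw [hF]
    rw [clamp_diff a b (T n) (T n + w 1) hab hcd]
    have hΔ : stDelta n w i 1 = b - T n := by
      simp only [stDelta, stS, if_neg (by omega : ¬ i = 0), if_pos rfl]
      rw [hb, hT]
      norm_num
      ring
    have ewi : w i = b - a := by rw [hb, ha, hTi]; ring
    have ew1 : w 1 = (T n + w 1) - T n := by ring
    have e2 : w i + w 1 - (b - T n) = (T n + w 1) - a := by
      rw [ewi]; ring
    rw [stFlow, hΔ, e2, ewi]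
    congr 3
    ring_nf
  -- split the sum
  have hsplit : Finset.Icc 1 n = insert 1 (Finset.Icc 2 n) := by
    ext k; simp only [Finset.mem_Icc, Finset.mem_insert]; omega
  rw [hsplit, Finset.sum_insert (by simp), key1, Finset.sum_congr rfl key2]
  -- telescope
  have htel : ∑ j ∈ Finset.Icc 2 n, (F (T j) - F (T (j - 1))) = F (T n) - F (T 1) := by
    have hIcc : Finset.Icc 2 n = Finset.Ico 2 (n + 1) := by
      ext k; simp [Finset.mem_Icc, Finset.mem_Ico]
    rw [hIcc, Finset.sum_Ico_eq_sum_range]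
    have h1 : ∀ k, F (T (2 + k)) - F (T (2 + k - 1)) =
        (fun m => F (T (m + 1))) (k + 1) - (fun m => F (T (m + 1))) k := by
      intro k
      simp only []
      congr 3 <;> omega
    rw [Finset.sum_congr rfl (fun k _ => h1 k), Finset.sum_range_sub (fun m => F (T (m + 1)))]
    norm_num [show n + 1 - 2 + 1 = n from by omega]
  rw [htel]
  -- evaluate endpoints
  have hb_le : b ≤ T n + w 1 := by
    rw [hb]; have := hTmono i n hi.2 le_rfl; linarith
  have hFtop : F (T n + w 1) = b := by
    rw [hF]
    simp only []
    rw [max_eq_right, min_eq_left hb_le]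
    rw [ha]; have := hTmono (i-1) n (by omega) le_rfl; linarith
  have hFbot : F (T 1) = a := by
    rw [hF, hT1]
    simp only []
    rw [max_eq_left, min_eq_right hab]
    rw [ha]; have := hTnonneg (i-1) (by omega); linarith
  rw [hFtop, hFbot]
  rw [hb, ha, hTi]; ring
end

section
/- For the Suwa–Todo flow, the diagonal elements satisfy v_{11} = max(0, w_1 − Σ_{i=2}^n w_i) and v_{ii} = 0 for all i ≥ 2. -/
open Finset

/-- The diagonal of the Suwa–Todo flow: `v 1 1 = max (0, w 1 - ∑_{i=2}^n w i)` and
`v i i = 0` for `2 ≤ i ≤ n`. -/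
theorem suwa_todo_diagonal (n : ℕ) (hn : 2 ≤ n) (w : ℕ → ℝ)
    (hw : ∀ k ∈ Finset.Icc 1 n, 0 < w k)
    (hmax : ∀ k ∈ Finset.Icc 1 n, w k ≤ w 1) :
    stFlow n w 1 1 = max 0 (w 1 - ∑ i ∈ Finset.Icc 2 n, w i) ∧
    ∀ i ∈ Finset.Icc 2 n, stFlow n w i i = 0 := by
  constructor
  · -- v 1 1
    have hsplit : Finset.Icc 1 n = insert 1 (Finset.Icc 2 n) := by
      ext x; simp [Finset.mem_Icc]; omega
    have hnot : (1 : ℕ) ∉ Finset.Icc 2 n := by simp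
    have hSn : ∑ k ∈ Finset.Icc 1 n, w k = w 1 + ∑ k ∈ Finset.Icc 2 n, w k := by
      rw [hsplit, Finset.sum_insert hnot]
    set T := ∑ k ∈ Finset.Icc 2 n, w k with hT
    have hTpos : 0 < T := by
      apply Finset.sum_pos
      · intro k hk
        exact hw k (by simp [Finset.mem_Icc] at hk ⊢; omega)
      · exact ⟨2, by simp [Finset.mem_Icc]; omega⟩
    have hΔ : stDelta n w 1 1 = w 1 - T := by
      simp [stDelta, stS, hSn]; ring
    have hmin : min (stDelta n w 1 1)
        (min (w 1 + w 1 - stDelta n w 1 1) (min (w 1) (w 1))) = w 1 - T := by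
      rw [hΔ, min_self]
      have h1 : w 1 - T ≤ w 1 + w 1 - (w 1 - T) := by linarith
      have h2 : w 1 - T ≤ w 1 := by linarith
      rw [min_eq_left (le_min h1 h2)]
    rw [stFlow, hmin]
  · intro i hi
    simp only [Finset.mem_Icc] at hi
    have hi1 : i - 1 ≠ 0 := by omega
    have hi0 : i ≠ 0 := by omega
    have hstep : ∑ k ∈ Finset.Icc 1 i, w k = ∑ k ∈ Finset.Icc 1 (i - 1), w k + w i := by
      have h : i - 1 + 1 = i := by omega
      rw [← h, Finset.sum_Icc_succ_top (by omega)]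
      rw [h]
    have hΔ : stDelta n w i i = w i + w 1 := by
      simp [stDelta, stS, hi0, hi1, hstep]
    have hwi : w i ≤ w 1 := hmax i (by simp [Finset.mem_Icc]; omega)
    have hmin_le : min (stDelta n w i i)
        (min (w i + w i - stDelta n w i i) (min (w i) (w i))) ≤ 0 := by
      calc min (stDelta n w i i) (min (w i + w i - stDelta n w i i) (min (w i) (w i)))
          ≤ w i + w i - stDelta n w i i := le_trans (min_le_right _ _) (min_le_left _ _)
        _ ≤ 0 := by rw [hΔ]; linarith
    rw [stFlow, max_eq_left hmin_le]
end

section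
/- If the maximal weight satisfies w_1 ≤ (1/2) Σ_{k=1}^n w_k, then the Suwa–Todo flow is rejection-free: v_{ii} = 0 for all i. -/
open Finset

/-- If `w 1 ≤ (∑ w k) / 2`, the Suwa–Todo flow is rejection-free: `v i i = 0` for all `i`. -/
theorem suwa_todo_rejection_free (n : ℕ) (hn : 2 ≤ n) (w : ℕ → ℝ)
    (hw : ∀ k ∈ Finset.Icc 1 n, 0 < w k)
    (hmax : ∀ k ∈ Finset.Icc 1 n, w k ≤ w 1)
    (h : w 1 ≤ (∑ k ∈ Finset.Icc 1 n, w k) / 2) :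
    ∀ i ∈ Finset.Icc 1 n, stFlow n w i i = 0 := by
  intro i hi
  rw [Finset.mem_Icc] at hi
  obtain ⟨h1, h2⟩ := hi
  have key : min (stDelta n w i i) (min (w i + w i - stDelta n w i i)
      (min (w i) (w i))) ≤ 0 := by
    rcases eq_or_lt_of_le h1 with heq | hlt
    · -- i = 1 : Δ = 2 w 1 - S n ≤ 0
      have hD : stDelta n w i i = w 1 + w 1 - ∑ k ∈ Finset.Icc 1 n, w k := by
        subst heq
        simp [stDelta, stS]
        ring
      have : stDelta n w i i ≤ 0 := by rw [hD]; linarith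
      exact le_trans (min_le_left _ _) this
    · -- i ≥ 2 : Δ = w i + w 1, so w i + w i - Δ = w i - w 1 ≤ 0
      have hD : stDelta n w i i = w i + w 1 := by
        have hi0 : i ≠ 0 := by omega
        have hi1 : i - 1 ≠ 0 := by omega
        have hsum : ∑ k ∈ Finset.Icc 1 i, w k
            = ∑ k ∈ Finset.Icc 1 (i - 1), w k + w i := by
          have : i = (i - 1) + 1 := by omega
          rw [this, Finset.sum_Icc_succ_top (by omega : 1 ≤ i - 1 + 1)]
          congr 1 <;> omega
        simp only [stDelta, stS, if_neg hi0, if_neg hi1, hsum]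
        ring
      have hle : w i - w 1 ≤ 0 := by
        have := hmax i (Finset.mem_Icc.mpr ⟨h1, h2⟩)
        linarith
      refine le_trans (le_trans (min_le_right _ _) (min_le_left _ _)) ?_
      rw [hD]; linarith
  simp only [stFlow]
  exact max_eq_left key
end

section
/- If w_1 > (1/2) Σ_{k=1}^n w_k, then any stochastic flow (v_{ij}) with nonnegative entries satisfying row sums Σ_j v_{ij} = w_i and column sums Σ_i v_{ij} = w_j must have v_{11} ≥ w_1 − Σ_{i=2}^n w_i > 0; hence the Suwa–Todo flow minimizes the total rejection Σ_i v_{ii} among all such flows. -/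
open Finset

/-- If `w 1 > (∑ w k) / 2`, then any stochastic flow (nonnegative, with row sums
`w i` and column sums `w j`) has `v 1 1 ≥ w 1 - ∑_{i=2}^n w i > 0`; in particular the
total rejection `∑ v i i` is at least `max (0, w 1 - ∑_{i≥2} w i)`, the value achieved
by the Suwa–Todo flow. -/
theorem rejection_lower_bound (n : ℕ) (hn : 2 ≤ n) (w : ℕ → ℝ)
    (hw : ∀ k ∈ Finset.Icc 1 n, 0 < w k)
    (hmax : ∀ k ∈ Finset.Icc 1 n, w k ≤ w 1)
    (h : (∑ k ∈ Finset.Icc 1 n, w k) / 2 < w 1)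
    (v : ℕ → ℕ → ℝ)
    (hpos : ∀ i ∈ Finset.Icc 1 n, ∀ j ∈ Finset.Icc 1 n, 0 ≤ v i j)
    (hrow : ∀ i ∈ Finset.Icc 1 n, ∑ j ∈ Finset.Icc 1 n, v i j = w i)
    (hcol : ∀ j ∈ Finset.Icc 1 n, ∑ i ∈ Finset.Icc 1 n, v i j = w j) :
    (w 1 - ∑ i ∈ Finset.Icc 2 n, w i ≤ v 1 1) ∧
    (0 < w 1 - ∑ i ∈ Finset.Icc 2 n, w i) ∧
    (max 0 (w 1 - ∑ i ∈ Finset.Icc 2 n, w i) ≤ ∑ i ∈ Finset.Icc 1 n, v i i) := by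
  have h1mem : (1 : ℕ) ∈ Finset.Icc 1 n := by simp; omega
  have hins : Finset.Icc 1 n = insert 1 (Finset.Icc 2 n) := by
    ext x; simp; omega
  have h1not : (1 : ℕ) ∉ Finset.Icc 2 n := by simp
  -- split the weight sum
  have hsplit : ∀ f : ℕ → ℝ, ∑ k ∈ Finset.Icc 1 n, f k = f 1 + ∑ k ∈ Finset.Icc 2 n, f k := by
    intro f; rw [hins, Finset.sum_insert h1not]
  -- v 1 j ≤ w j for j ≥ 2
  have hle : ∀ j ∈ Finset.Icc 2 n, v 1 j ≤ w j := by
    intro j hj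
    have hjmem : j ∈ Finset.Icc 1 n := by simp at hj ⊢; omega
    rw [← hcol j hjmem, hsplit fun i => v i j]
    have : 0 ≤ ∑ i ∈ Finset.Icc 2 n, v i j := Finset.sum_nonneg fun i hi => by
      apply hpos i (by simp at hi ⊢; omega) j hjmem
    linarith
  have hrow1 := hrow 1 h1mem
  rw [hsplit fun j => v 1 j] at hrow1
  have hsum_le : ∑ j ∈ Finset.Icc 2 n, v 1 j ≤ ∑ j ∈ Finset.Icc 2 n, w j :=
    Finset.sum_le_sum hle
  have H1 : w 1 - ∑ i ∈ Finset.Icc 2 n, w i ≤ v 1 1 := by linarith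
  have H2 : 0 < w 1 - ∑ i ∈ Finset.Icc 2 n, w i := by
    rw [hsplit w] at h; linarith
  refine ⟨H1, H2, ?_⟩
  have hdiag : v 1 1 ≤ ∑ i ∈ Finset.Icc 1 n, v i i := by
    apply Finset.single_le_sum (f := fun i => v i i) (fun i hi => hpos i hi i hi) h1mem
  have h0 : (0:ℝ) ≤ ∑ i ∈ Finset.Icc 1 n, v i i :=
    Finset.sum_nonneg fun i hi => hpos i hi i hi
  exact max_le h0 (le_trans H1 hdiag)
end

section
/- The transition matrix P_{ij} = v_{ij}/w_i defined by the Suwa–Todo flow on n states is irreducible: for all states a, b there exists m < 2n with (P^m)_{ab} > 0. -/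
open Finset

/-- The transition matrix `P i j = v i j / w i` defined by the Suwa–Todo flow is
irreducible: any state can be reached from any other in fewer than `2 n` steps. -/
theorem suwa_todo_irreducible (n : ℕ) (hn : 2 ≤ n) (w : ℕ → ℝ)
    (hw : ∀ k ∈ Finset.Icc 1 n, 0 < w k)
    (hmax : ∀ k ∈ Finset.Icc 1 n, w k ≤ w 1)
    (P : Matrix (Fin n) (Fin n) ℝ)
    (hP : ∀ i j : Fin n, P i j = stFlow n w (i.val + 1) (j.val + 1) / w (i.val + 1)) :
    ∀ a b : Fin n, ∃ m : ℕ, m < 2 * n ∧ 0 < (P ^ m) a b := by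
  classical
  have hn1 : 1 ≤ n := by omega
  have hw1 : 0 < w 1 := hw 1 (Finset.mem_Icc.mpr ⟨le_rfl, hn1⟩)
  set T : ℕ → ℝ := fun i => ∑ k ∈ Finset.Icc 1 i, w k with hT
  have hTmono : ∀ i j : ℕ, i < j → j ≤ n → T i < T j := by
    intro i j hij hj
    have hIcc : ∀ m : ℕ, Finset.Icc 1 m = Finset.Ioc 0 m := fun m => Finset.Icc_add_one_left_eq_Ioc 0 m
    have hsum := Finset.sum_Ioc_consecutive w (Nat.zero_le i) (le_of_lt hij)
    have hpos : 0 < ∑ k ∈ Finset.Ioc i j, w k := by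
      apply Finset.sum_pos
      · intro k hk
        rw [Finset.mem_Ioc] at hk
        exact hw k (Finset.mem_Icc.mpr ⟨by omega, by omega⟩)
      · exact Finset.nonempty_Ioc.mpr hij
    simp only [hT, hIcc]
    linarith [hsum]
  have hTle : ∀ i j : ℕ, i ≤ j → j ≤ n → T i ≤ T j := by
    intro i j hij hj
    rcases eq_or_lt_of_le hij with h | h
    · rw [h]
    · exact le_of_lt (hTmono i j h hj)
  have hTsucc : ∀ i : ℕ, T (i + 1) = T i + w (i + 1) := by
    intro i
    simp only [hT]
    exact Finset.sum_Icc_succ_top (by omega) w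
  have hT0 : T 0 = 0 := by simp [hT]
  have hT1 : T 1 = w 1 := by simp [hT]
  have hwpos : ∀ i : Fin n, 0 < w (i.val + 1) :=
    fun i => hw _ (Finset.mem_Icc.mpr ⟨by omega, by omega⟩)
  have hwmax : ∀ i : Fin n, w (i.val + 1) ≤ w 1 :=
    fun i => hmax _ (Finset.mem_Icc.mpr ⟨by omega, by omega⟩)
  have z : Fin n := ⟨0, by omega⟩
  have hPpos : ∀ i j : Fin n, 0 < stDelta n w (i.val + 1) (j.val + 1) →
      stDelta n w (i.val + 1) (j.val + 1) < w (i.val + 1) + w (j.val + 1) → 0 < P i j := by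
    intro i j h1 h2
    rw [hP]
    apply div_pos _ (hwpos i)
    rw [stFlow, lt_max_iff]
    right
    simp only [lt_min_iff]
    exact ⟨h1, by linarith, hwpos i, hwpos j⟩
  have hDelta1 : ∀ i j : Fin n, 1 ≤ j.val →
      stDelta n w (i.val + 1) (j.val + 1) = T (i.val + 1) - T j.val + w 1 := by
    intro i j hj
    rw [stDelta]
    simp only [Nat.add_sub_cancel]
    rw [stS, stS, if_neg (by omega), if_neg (by omega)]
  have hDelta0 : ∀ i : Fin n,
      stDelta n w (i.val + 1) 1 = T (i.val + 1) - T n + w 1 := by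
    intro i
    rw [stDelta]
    norm_num
    rw [stS, stS, if_neg (by omega), if_pos rfl]
  have hEdge1 : ∀ i j : Fin n, 1 ≤ j.val → T j.val < T (i.val + 1) + w 1 →
      T i.val + w 1 < T (j.val + 1) → 0 < P i j := by
    intro i j hj h1 h2
    apply hPpos
    · rw [hDelta1 i j hj]; linarith
    · rw [hDelta1 i j hj]
      have e1 := hTsucc i.val
      have e2 := hTsucc j.val
      linarith
  have hEdge0 : ∀ i : Fin n, T n < T (i.val + 1) + w 1 → T i.val < T n →
      0 < P i ⟨0, by omega⟩ := by
    intro i h1 h2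
    apply hPpos
    · show 0 < stDelta n w (i.val + 1) (0 + 1)
      rw [zero_add, hDelta0 i]; linarith
    · show stDelta n w (i.val + 1) (0 + 1) < w (i.val + 1) + w (0 + 1)
      rw [zero_add, hDelta0 i]
      have e1 := hTsucc i.val
      linarith
  -- Forward step: from any state, either move to a strictly larger state or to state 0.
  have hFwd : ∀ a : Fin n,
      (∃ b : Fin n, a.val < b.val ∧ 0 < P a b) ∨ 0 < P a ⟨0, by omega⟩ := by
    intro a
    by_cases hc : T a.val + w 1 < T n
    · left
      have hexQ : ∃ j : ℕ, 1 ≤ j ∧ j ≤ n ∧ T a.val + w 1 < T j := ⟨n, hn1, le_rfl, hc⟩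
      set j := Nat.find hexQ with hj
      obtain ⟨hj1, hjn, hjT⟩ := Nat.find_spec hexQ
      have hlt : a.val + 1 < j := by
        by_contra hcon
        push_neg at hcon
        have : T j ≤ T (a.val + 1) := hTle j (a.val + 1) hcon (by omega)
        have : T (a.val + 1) = T a.val + w (a.val + 1) := hTsucc a.val
        have := hwmax a
        linarith
      refine ⟨⟨j - 1, by omega⟩, ?_, ?_⟩
      · show a.val < j - 1
        omega
      apply hEdge1
      · show 1 ≤ j - 1; omega
      · show T (j - 1) < T (a.val + 1) + w 1
        have hmin := Nat.find_min hexQ (m := j - 1) (by omega)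
        push_neg at hmin
        have h1 : T (j - 1) ≤ T a.val + w 1 := hmin (by omega) (by omega)
        have h2 : T a.val < T (a.val + 1) := hTmono a.val (a.val + 1) (by omega) (by omega)
        linarith
      · show T a.val + w 1 < T (j - 1 + 1)
        have : j - 1 + 1 = j := by omega
        rw [this]
        exact hjT
    · right
      push_neg at hc
      apply hEdge0
      · have : T a.val < T (a.val + 1) := hTmono a.val (a.val + 1) (by omega) (by omega)
        linarith
      · exact hTmono a.val n (by omega) le_rfl
  -- Backward step: any state other than 0 has an in-edge from a strictly smaller state.
  have hBwd : ∀ b : Fin n, 1 ≤ b.val → ∃ a : Fin n, a.val < b.val ∧ 0 < P a b := by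
    intro b hb
    have hexQ : ∃ i : ℕ, 1 ≤ i ∧ i ≤ n ∧ T b.val < T i + w 1 := by
      refine ⟨n, hn1, le_rfl, ?_⟩
      have : T b.val ≤ T n := hTle b.val n (by omega) le_rfl
      linarith
    set i := Nat.find hexQ with hi
    obtain ⟨hi1, hin, hiT⟩ := Nat.find_spec hexQ
    have hle : i ≤ b.val := by
      rcases eq_or_lt_of_le hi1 with h | h
      · omega
      · -- i ≥ 2; minimality at i - 1
        have hmin := Nat.find_min hexQ (m := i - 1) (by omega)
        push_neg at hmin
        have h1 : T b.val ≥ T (i - 1) + w 1 := hmin (by omega) (by omega)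
        have h2 : T (i - 1) < T b.val := by linarith
        by_contra hcon
        push_neg at hcon
        have : T b.val ≤ T (i - 1) := hTle b.val (i - 1) (by omega) (by omega)
        linarith
    refine ⟨⟨i - 1, by omega⟩, ?_, ?_⟩
    · show i - 1 < b.val
      omega
    apply hEdge1
    · exact hb
    · show T b.val < T (i - 1 + 1) + w 1
      have : i - 1 + 1 = i := by omega
      rw [this]
      exact hiT
    · show T (i - 1 : ℕ) + w 1 < T (b.val + 1)
      rcases eq_or_lt_of_le hi1 with h | h
      · have : i - 1 = 0 := by omega
        rw [this, hT0]
        have : T 1 < T (b.val + 1) := hTmono 1 (b.val + 1) (by omega) (by omega)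
        rw [hT1] at this
        linarith
      · have hmin := Nat.find_min hexQ (m := i - 1) (by omega)
        push_neg at hmin
        have h1 : T b.val ≥ T (i - 1) + w 1 := hmin (by omega) (by omega)
        have h2 : T b.val < T (b.val + 1) := hTmono b.val (b.val + 1) (by omega) (by omega)
        linarith
  -- nonnegativity of entries of powers
  have hPn : ∀ i j : Fin n, 0 ≤ P i j := by
    intro i j
    rw [hP]
    exact div_nonneg (le_max_left 0 _) (le_of_lt (hwpos i))
  have hPow : ∀ (m : ℕ) (i j : Fin n), 0 ≤ (P ^ m) i j := by
    intro m
    induction m with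
    | zero =>
      intro i j
      rw [pow_zero]
      rcases eq_or_ne i j with h | h
      · rw [h, Matrix.one_apply_eq]; norm_num
      · rw [Matrix.one_apply_ne h]
    | succ m ih =>
      intro i j
      rw [pow_succ, Matrix.mul_apply]
      exact Finset.sum_nonneg fun c _ => mul_nonneg (ih i c) (hPn c j)
  have hChain : ∀ (m₁ m₂ : ℕ) (i c j : Fin n), 0 < (P ^ m₁) i c → 0 < (P ^ m₂) c j →
      0 < (P ^ (m₁ + m₂)) i j := by
    intro m₁ m₂ i c j h1 h2
    rw [pow_add, Matrix.mul_apply]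
    exact Finset.sum_pos' (fun x _ => mul_nonneg (hPow _ _ _) (hPow _ _ _))
      ⟨c, Finset.mem_univ c, mul_pos h1 h2⟩
  -- reach state 0 from anywhere in at most n - a.val steps
  have hR0 : ∀ (k : ℕ) (a : Fin n), n - 1 - a.val ≤ k →
      ∃ m, m ≤ n - a.val ∧ 0 < (P ^ m) a ⟨0, by omega⟩ := by
    intro k
    induction k with
    | zero =>
      intro a ha
      rcases hFwd a with ⟨b, hb, hpb⟩ | hp0
      · have := b.isLt
        omega
      · exact ⟨1, by omega, by rwa [pow_one]⟩
    | succ k ih =>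
      intro a ha
      rcases hFwd a with ⟨b, hb, hpb⟩ | hp0
      · obtain ⟨m, hm, hpm⟩ := ih b (by omega)
        have hbn := b.isLt
        exact ⟨1 + m, by omega, hChain 1 m a b _ (by rwa [pow_one]) hpm⟩
      · exact ⟨1, by omega, by rwa [pow_one]⟩
  -- reach any state from state 0 in at most b.val steps
  have hR1 : ∀ (k : ℕ) (b : Fin n), b.val ≤ k →
      ∃ m, m ≤ b.val ∧ 0 < (P ^ m) ⟨0, by omega⟩ b := by
    intro k
    induction k with
    | zero =>
      intro b hbk
      have hb0 : b = ⟨0, by omega⟩ := by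
        apply Fin.ext
        show b.val = 0
        omega
      refine ⟨0, Nat.zero_le _, ?_⟩
      rw [pow_zero, hb0, Matrix.one_apply_eq]
      norm_num
    | succ k ih =>
      intro b hbk
      by_cases hb0 : b.val = 0
      · have hb0' : b = ⟨0, by omega⟩ := by
          apply Fin.ext
          show b.val = 0
          omega
        refine ⟨0, Nat.zero_le _, ?_⟩
        rw [pow_zero, hb0', Matrix.one_apply_eq]
        norm_num
      · obtain ⟨aa, haa, hpaa⟩ := hBwd b (by omega)
        obtain ⟨m, hm, hpm⟩ := ih aa (by omega)
        exact ⟨m + 1, by omega, hChain m 1 _ aa _ hpm (by rwa [pow_one])⟩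
  intro a b
  obtain ⟨m₁, hm₁, hp₁⟩ := hR0 (n - 1) a (by omega)
  obtain ⟨m₂, hm₂, hp₂⟩ := hR1 (n - 1) b (by omega)
  have hbn := b.isLt
  have han := a.isLt
  exact ⟨m₁ + m₂, by omega, hChain m₁ m₂ a _ b hp₁ hp₂⟩
end

section
/- Let P be a stochastic matrix on a finite state space S. If there exist a state c and two cycles through c of coprime lengths p and q (i.e., (P^p)_{cc} > 0 and (P^q)_{cc} > 0 with gcd(p,q) = 1), and P is irreducible, then P is primitive: there exists N such that (P^k)_{ab} > 0 for all states a, b and all k ≥ N. -/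
section aux

variable {S : Type*} [Fintype S] [DecidableEq S] (P : Matrix S S ℝ)

lemma pow_entries_nonneg (hpos : ∀ a b, 0 ≤ P a b) :
    ∀ m a b, 0 ≤ (P ^ m) a b := by
  intro m
  induction m with
  | zero => intro a b; simp [Matrix.one_apply]; positivity
  | succ n ih =>
    intro a b
    rw [pow_succ, Matrix.mul_apply]
    exact Finset.sum_nonneg fun j _ => mul_nonneg (ih a j) (hpos j b)

lemma pow_add_ge (hpos : ∀ a b, 0 ≤ P a b) (m n : ℕ) (a b c : S) :
    (P ^ m) a c * (P ^ n) c b ≤ (P ^ (m + n)) a b := by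
  rw [pow_add, Matrix.mul_apply]
  exact Finset.single_le_sum
    (fun j _ => mul_nonneg (pow_entries_nonneg P hpos m a j) (pow_entries_nonneg P hpos n j b))
    (Finset.mem_univ c)

lemma pow_mul_pos (hpos : ∀ a b, 0 ≤ P a b) {p : ℕ} {c : S} (h : 0 < (P ^ p) c c) :
    ∀ x : ℕ, 0 < (P ^ (x * p)) c c := by
  intro x
  induction x with
  | zero => simp [Matrix.one_apply]
  | succ n ih =>
    have := pow_add_ge P hpos (n * p) p c c c
    have := mul_pos ih h
    have hle := pow_add_ge P hpos (n * p) p c c c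
    calc (0:ℝ) < (P ^ (n * p)) c c * (P ^ p) c c := mul_pos ih h
      _ ≤ (P ^ (n * p + p)) c c := hle
      _ = (P ^ ((n + 1) * p)) c c := by ring_nf

end aux

/-- An irreducible stochastic matrix admitting two cycles of coprime lengths through a
common state is primitive (ergodic). -/
theorem irreducible_coprime_cycles_primitive {S : Type*} [Fintype S] [DecidableEq S]
    [Nonempty S] (P : Matrix S S ℝ)
    (hpos : ∀ a b, 0 ≤ P a b) (hrow : ∀ a, ∑ b, P a b = 1)
    (hirr : ∀ a b : S, ∃ m : ℕ, 0 < (P ^ m) a b)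
    (c : S) (p q : ℕ) (hp : 0 < p) (hq : 0 < q) (hcop : Nat.Coprime p q)
    (hcycp : 0 < (P ^ p) c c) (hcycq : 0 < (P ^ q) c c) :
    ∃ N : ℕ, ∀ a b : S, ∀ k : ℕ, N ≤ k → 0 < (P ^ k) a b := by
  -- Step 1: all k ≥ p*q give (P^k) c c > 0
  have hcc : ∀ k : ℕ, p * q ≤ k → 0 < (P ^ k) c c := by
    intro k hk
    -- get representation k = x*p + y*q
    have hrep : ∃ x y : ℕ, x * p + y * q = k := by
      rcases eq_or_lt_of_le (show 1 ≤ p from hp) with hp1 | hp1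
      · exact ⟨k, 0, by simp [← hp1]⟩
      rcases eq_or_lt_of_le (show 1 ≤ q from hq) with hq1 | hq1
      · exact ⟨0, k, by simp [← hq1]⟩
      have hfrob := frobeniusNumber_pair hcop hp1 hq1
      have hnot : k ∉ { k | k ∉ AddSubmonoid.closure ({p, q} : Set ℕ) } := by
        intro hmem
        have h2 := hfrob.2 hmem
        have hmn : p + q ≤ p * q := Nat.add_le_mul hp1 hq1
        omega
      simp only [Set.mem_setOf_eq, not_not] at hnot
      rw [AddSubmonoid.mem_closure_pair] at hnot
      obtain ⟨x, y, hxy⟩ := hnot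
      exact ⟨x, y, by simpa [smul_eq_mul] using hxy⟩
    obtain ⟨x, y, hxy⟩ := hrep
    have h1 := pow_mul_pos P hpos hcycp x
    have h2 := pow_mul_pos P hpos hcycq y
    have hle := pow_add_ge P hpos (x * p) (y * q) c c c
    rw [hxy] at hle
    exact lt_of_lt_of_le (mul_pos h1 h2) hle
  -- Step 2: choose exponents to reach c from a and b from c
  classical
  let f : S → ℕ := fun a => (hirr a c).choose
  let g : S → ℕ := fun b => (hirr c b).choose
  have hf : ∀ a, 0 < (P ^ (f a)) a c := fun a => (hirr a c).choose_spec
  have hg : ∀ b, 0 < (P ^ (g b)) c b := fun b => (hirr c b).choose_spec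
  refine ⟨p * q + Finset.univ.sup f + Finset.univ.sup g, fun a b k hk => ?_⟩
  have hfa : f a ≤ Finset.univ.sup f := Finset.le_sup (Finset.mem_univ a)
  have hgb : g b ≤ Finset.univ.sup g := Finset.le_sup (Finset.mem_univ b)
  have hmid : p * q ≤ k - f a - g b := by omega
  have hsum : f a + (k - f a - g b) + g b = k := by omega
  have h1 := pow_add_ge P hpos (f a) (k - f a - g b) a c c
  have h2 := pow_add_ge P hpos (f a + (k - f a - g b)) (g b) a b c
  rw [hsum] at h2
  calc (0:ℝ) < ((P ^ (f a)) a c * (P ^ (k - f a - g b)) c c) * (P ^ (g b)) c b :=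
        mul_pos (mul_pos (hf a) (hcc _ hmid)) (hg b)
    _ ≤ (P ^ (f a + (k - f a - g b))) a c * (P ^ (g b)) c b := by
        apply mul_le_mul_of_nonneg_right h1 (pow_entries_nonneg P hpos _ _ _)
    _ ≤ (P ^ k) a b := h2
end

section
/- Let π be a probability distribution on a finite set with all π_i > 0. The Metropolized Gibbs transition probabilities p_{ij} = min(π_j/(1 − π_i), π_j/(1 − π_j)) for i ≠ j, with p_{ii} = 1 − Σ_{j≠i} p_{ij}, define a valid stochastic matrix (all entries nonnegative, rows summing to 1) that is reversible with respect to π: π_i p_{ij} = π_j p_{ji} for all i ≠ j. -/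
open Finset

/-- The Metropolized Gibbs sampler transition matrix for a probability vector `π`. -/
noncomputable def metroGibbs (n : ℕ) (π : ℕ → ℝ) (i j : ℕ) : ℝ :=
  if i = j then 1 - ∑ k ∈ (Finset.Icc 1 n).erase i, min (π k / (1 - π i)) (π k / (1 - π k))
  else min (π j / (1 - π i)) (π j / (1 - π j))

/-- The Metropolized Gibbs sampler is a valid stochastic matrix, reversible with
respect to `π`. -/
theorem metropolized_gibbs_valid (n : ℕ) (hn : 2 ≤ n) (π : ℕ → ℝ)
    (hπ : ∀ k ∈ Finset.Icc 1 n, 0 < π k ∧ π k < 1)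
    (hsum : ∑ k ∈ Finset.Icc 1 n, π k = 1) :
    (∀ i ∈ Finset.Icc 1 n, ∀ j ∈ Finset.Icc 1 n, 0 ≤ metroGibbs n π i j) ∧
    (∀ i ∈ Finset.Icc 1 n, ∑ j ∈ Finset.Icc 1 n, metroGibbs n π i j = 1) ∧
    (∀ i ∈ Finset.Icc 1 n, ∀ j ∈ Finset.Icc 1 n, i ≠ j →
      π i * metroGibbs n π i j = π j * metroGibbs n π j i) := by
  have hpos : ∀ k ∈ Finset.Icc 1 n, 0 < 1 - π k := fun k hk => by
    have := (hπ k hk).2; linarith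
  -- key bound: the off-diagonal row-sum is at most 1
  have hdiag : ∀ i ∈ Finset.Icc 1 n,
      ∑ k ∈ (Finset.Icc 1 n).erase i, min (π k / (1 - π i)) (π k / (1 - π k)) ≤ 1 := by
    intro i hi
    have h1 : ∑ k ∈ (Finset.Icc 1 n).erase i, min (π k / (1 - π i)) (π k / (1 - π k))
        ≤ ∑ k ∈ (Finset.Icc 1 n).erase i, π k / (1 - π i) :=
      Finset.sum_le_sum fun k hk => min_le_left _ _
    have h2 : ∑ k ∈ (Finset.Icc 1 n).erase i, π k / (1 - π i)
        = (1 - π i) / (1 - π i) := by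
      rw [← Finset.sum_div]
      congr 1
      have := Finset.add_sum_erase _ π hi
      linarith [hsum, this]
    have h3 : (1 - π i) / (1 - π i) = 1 := div_self (ne_of_gt (hpos i hi))
    linarith [h1, h2.symm ▸ h3 ▸ h1]
  have hoffnn : ∀ i ∈ Finset.Icc 1 n, ∀ j ∈ Finset.Icc 1 n,
      0 ≤ min (π j / (1 - π i)) (π j / (1 - π j)) := by
    intro i hi j hj
    exact le_min (div_nonneg (hπ j hj).1.le (hpos i hi).le)
      (div_nonneg (hπ j hj).1.le (hpos j hj).le)
  refine ⟨?_, ?_, ?_⟩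
  · intro i hi j hj
    unfold metroGibbs
    split_ifs with h
    · linarith [hdiag i hi]
    · exact hoffnn i hi j hj
  · intro i hi
    rw [← Finset.add_sum_erase _ _ hi]
    have : ∑ j ∈ (Finset.Icc 1 n).erase i, metroGibbs n π i j
        = ∑ j ∈ (Finset.Icc 1 n).erase i, min (π j / (1 - π i)) (π j / (1 - π j)) := by
      apply Finset.sum_congr rfl
      intro j hj
      have hne : i ≠ j := fun h => (Finset.mem_erase.mp hj).1 h.symm
      simp [metroGibbs, hne]
    rw [this]
    simp [metroGibbs]
  · intro i hi j hj hij
    have hπi := (hπ i hi).1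
    have hπj := (hπ j hj).1
    simp only [metroGibbs, if_neg hij, if_neg (Ne.symm hij)]
    rw [div_eq_mul_inv, div_eq_mul_inv, div_eq_mul_inv, div_eq_mul_inv,
      ← mul_min_of_nonneg _ _ hπj.le, ← mul_min_of_nonneg _ _ hπi.le,
      min_comm ((1 - π j)⁻¹) ((1 - π i)⁻¹)]
    ring
end
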